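/- Let σ² > 0 and define Λ(ν) = (σ²/2) ∫∫_{[0,T]²} min(s,t) ν(ds) ν(dt) for signed measures ν on [0,T]. Then for every φ ∈ C²([0,T]) with φ(0) = 0, the Fenchel–Legendre transform Λ*(φ) = sup_ν { ∫ φ dν - Λ(ν) } equals (1/(2σ²)) ∫₀ᵀ |φ'(t)|² dt, with the supremum attained at ν(dt) = -(φ''(t)/σ²) dt + (φ'(T)/σ²) δ_T(dt). -/

import Mathlib

open MeasureTheory Set

namespace FLB

noncomputable def G (μ : Measure ℝ) (u : ℝ) : ℝ := (μ (Ici u)).toReal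

lemma G_nonneg (μ : Measure ℝ) (u : ℝ) : 0 ≤ G μ u := ENNReal.toReal_nonneg

lemma G_le (μ : Measure ℝ) [IsFiniteMeasure μ] (u : ℝ) : G μ u ≤ (μ univ).toReal :=
  ENNReal.toReal_mono (measure_ne_top μ _) (measure_mono (subset_univ _))

lemma G_antitone (μ : Measure ℝ) [IsFiniteMeasure μ] : Antitone (G μ) := fun _ _ hab =>
  ENNReal.toReal_mono (measure_ne_top μ _) (measure_mono (Ici_subset_Ici.mpr hab))

lemma G_measurable (μ : Measure ℝ) [IsFiniteMeasure μ] : Measurable (G μ) :=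
  (G_antitone μ).measurable

lemma bddIntegrableOn {T : ℝ} {f : ℝ → ℝ}
    (hf : AEStronglyMeasurable f (volume.restrict (Icc 0 T)))
    {C : ℝ} (h : ∀ u ∈ Icc (0:ℝ) T, |f u| ≤ C) : IntegrableOn f (Icc 0 T) volume :=
  Integrable.mono' (integrable_const C) hf
    ((ae_restrict_mem measurableSet_Icc).mono fun u hu => by
      simpa [Real.norm_eq_abs] using h u hu)

lemma restrict_self {T : ℝ} {μ : Measure ℝ} (h : μ (Icc 0 T)ᶜ = 0) :
    μ.restrict (Icc 0 T) = μ :=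
  Measure.restrict_eq_self_of_ae_mem (by rw [ae_iff]; exact h)

lemma intA {T : ℝ} (hT : 0 ≤ T) {φ : ℝ → ℝ} (hφ : ContDiff ℝ 2 φ) (hφ0 : φ 0 = 0)
    (μ : Measure ℝ) [IsFiniteMeasure μ] (hs : μ (Icc 0 T)ᶜ = 0) :
    ∫ t, φ t ∂μ = ∫ u in Icc 0 T, deriv φ u * G μ u := by
  have hd : Continuous (deriv φ) := hφ.continuous_deriv (by norm_num)
  have hμr := restrict_self hs
  obtain ⟨C, hC⟩ := isCompact_Icc.exists_bound_of_continuousOn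
    (hd.continuousOn (s := Icc (0:ℝ) T))
  have hC0 : 0 ≤ C := le_trans (norm_nonneg _) (hC 0 (left_mem_Icc.mpr hT))
  have key : ∀ t ∈ Icc (0:ℝ) T,
      φ t = ∫ u in Icc (0:ℝ) T, (Iic t).indicator (deriv φ) u := by
    intro t ht
    have h1 : φ t = ∫ u in (0:ℝ)..t, deriv φ u := by
      rw [intervalIntegral.integral_deriv_eq_sub' φ rfl
        (fun x _ => (hφ.differentiable (by norm_num)).differentiableAt)
        hd.continuousOn, hφ0, sub_zero]
    rw [h1, intervalIntegral.integral_of_le ht.1, ← integral_Icc_eq_integral_Ioc,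
      setIntegral_indicator measurableSet_Iic,
      show Icc (0:ℝ) T ∩ Iic t = Icc 0 t by
        ext x
        simp only [mem_inter_iff, mem_Icc, mem_Iic]
        constructor
        · rintro ⟨⟨h0, _⟩, hx⟩; exact ⟨h0, hx⟩
        · rintro ⟨h0, hx⟩; exact ⟨⟨h0, hx.trans ht.2⟩, hx⟩]
  calc ∫ t, φ t ∂μ
      = ∫ t in Icc 0 T, φ t ∂μ := by conv_lhs => rw [← hμr]
    _ = ∫ t in Icc 0 T, (∫ u in Icc (0:ℝ) T, (Iic t).indicator (deriv φ) u) ∂μ :=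
        setIntegral_congr_fun measurableSet_Icc key
    _ = ∫ t, (∫ u in Icc (0:ℝ) T, (Iic t).indicator (deriv φ) u) ∂μ := by rw [hμr]
    _ = ∫ u in Icc (0:ℝ) T, (∫ t, (Iic t).indicator (deriv φ) u ∂μ) := by
        apply integral_integral_swap (f := fun t u => (Iic t).indicator (deriv φ) u)
        have hmeq : (Function.uncurry fun t u => (Iic t).indicator (deriv φ) u)
            = {p : ℝ × ℝ | p.2 ≤ p.1}.indicator (fun p => deriv φ p.2) := by
          funext p
          rcases p with ⟨t, u⟩
          by_cases h : u ≤ t <;> simp [Function.uncurry, indicator_apply, h]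
        have hmeas : AEStronglyMeasurable
            (Function.uncurry fun t u => (Iic t).indicator (deriv φ) u)
            (μ.prod (volume.restrict (Icc 0 T))) := by
          rw [hmeq]
          exact ((hd.measurable.comp measurable_snd).indicator
            (measurableSet_le measurable_snd measurable_fst)).aestronglyMeasurable
        refine Integrable.mono' (integrable_const C) hmeas ?_
        have hprod : μ.prod (volume.restrict (Icc 0 T))
            = (μ.prod volume).restrict (univ ×ˢ Icc 0 T) := by
          rw [← Measure.prod_restrict, Measure.restrict_univ]
        rw [hprod]
        filter_upwards [ae_restrict_mem (MeasurableSet.univ.prod measurableSet_Icc)] with p hp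
        rcases hp with ⟨-, hp2⟩
        by_cases h : p.2 ≤ p.1
        · simpa [Function.uncurry, indicator_apply, h] using hC p.2 hp2
        · simp [Function.uncurry, indicator_apply, h, hC0]
    _ = ∫ u in Icc (0:ℝ) T, deriv φ u * G μ u := by
        refine setIntegral_congr_fun measurableSet_Icc (fun u _ => ?_)
        have hrepr : (fun t => (Iic t).indicator (deriv φ) u)
            = fun t => (Ici u).indicator (fun _ => deriv φ u) t := by
          funext t
          by_cases h : u ≤ t <;> simp [indicator_apply, h]
        rw [hrepr, integral_indicator_const _ measurableSet_Ici, smul_eq_mul, mul_comm]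
        rfl

lemma intB {T : ℝ} (hT : 0 ≤ T) (μ ν : Measure ℝ) [IsFiniteMeasure μ] [IsFiniteMeasure ν]
    (hμ : μ (Icc 0 T)ᶜ = 0) (hν : ν (Icc 0 T)ᶜ = 0) :
    ∫ p : ℝ × ℝ, min p.1 p.2 ∂(μ.prod ν) = ∫ u in Icc 0 T, G μ u * G ν u := by
  haveI : IsFiniteMeasure (volume.restrict (Icc (0:ℝ) T)) :=
    ⟨by rw [Measure.restrict_apply_univ]; exact isCompact_Icc.measure_lt_top⟩
  have hprod : μ.prod ν = (μ.prod ν).restrict (Icc 0 T ×ˢ Icc 0 T) := by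
    conv_lhs => rw [← restrict_self hμ, ← restrict_self hν]
    rw [Measure.prod_restrict]
  have key : ∀ p ∈ Icc (0:ℝ) T ×ˢ Icc (0:ℝ) T,
      min p.1 p.2 = ∫ u in Icc (0:ℝ) T, (Ici u ×ˢ Ici u).indicator (fun _ => (1:ℝ)) p := by
    intro p hp
    have hfun : (fun u => (Ici u ×ˢ Ici u).indicator (fun _ => (1:ℝ)) p)
        = (Iic (min p.1 p.2)).indicator (fun _ => (1:ℝ)) := by
      funext u
      simp [indicator_apply, Set.mem_prod, Prod.le_def, le_min_iff]
    rw [hfun, integral_indicator_const (1:ℝ) measurableSet_Iic, smul_eq_mul, mul_one,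
      measureReal_def, Measure.restrict_apply measurableSet_Iic]
    have hset : Iic (min p.1 p.2) ∩ Icc 0 T = Icc 0 (min p.1 p.2) := by
      ext x
      simp only [mem_inter_iff, mem_Iic, mem_Icc]
      constructor
      · rintro ⟨h1, h2, _⟩; exact ⟨h2, h1⟩
      · rintro ⟨h1, h2⟩
        exact ⟨h2, h1, h2.trans ((min_le_left _ _).trans hp.1.2)⟩
    rw [hset, Real.volume_Icc, ENNReal.toReal_ofReal (by simp [le_min_iff, hp.1.1, hp.2.1]),
      sub_zero]
  calc ∫ p : ℝ × ℝ, min p.1 p.2 ∂(μ.prod ν)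
      = ∫ p in Icc (0:ℝ) T ×ˢ Icc (0:ℝ) T, min p.1 p.2 ∂(μ.prod ν) := by
        conv_lhs => rw [hprod]
    _ = ∫ p in Icc (0:ℝ) T ×ˢ Icc (0:ℝ) T,
          (∫ u in Icc (0:ℝ) T, (Ici u ×ˢ Ici u).indicator (fun _ => (1:ℝ)) p) ∂(μ.prod ν) :=
        setIntegral_congr_fun (measurableSet_Icc.prod measurableSet_Icc) key
    _ = ∫ p : ℝ × ℝ,
          (∫ u in Icc (0:ℝ) T, (Ici u ×ˢ Ici u).indicator (fun _ => (1:ℝ)) p) ∂(μ.prod ν) := by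
        conv_rhs => rw [hprod]
    _ = ∫ u in Icc (0:ℝ) T,
          (∫ p : ℝ × ℝ, (Ici u ×ˢ Ici u).indicator (fun _ => (1:ℝ)) p ∂(μ.prod ν)) := by
        apply integral_integral_swap
          (f := fun (p : ℝ × ℝ) u => (Ici u ×ˢ Ici u).indicator (fun _ => (1:ℝ)) p)
        have hmeq : (Function.uncurry fun (p : ℝ × ℝ) u =>
              (Ici u ×ˢ Ici u).indicator (fun _ => (1:ℝ)) p)
            = {q : (ℝ × ℝ) × ℝ | q.2 ≤ q.1.1 ∧ q.2 ≤ q.1.2}.indicator (fun _ => (1:ℝ)) := by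
          funext q
          rcases q with ⟨⟨a, b⟩, u⟩
          by_cases h : u ≤ a ∧ u ≤ b <;> simp [Function.uncurry, indicator_apply, Set.mem_prod, h]
        have hmeas : AEStronglyMeasurable
            (Function.uncurry fun (p : ℝ × ℝ) u =>
              (Ici u ×ˢ Ici u).indicator (fun _ => (1:ℝ)) p)
            ((μ.prod ν).prod (volume.restrict (Icc 0 T))) := by
          rw [hmeq]
          exact (measurable_const.indicator
            ((measurableSet_le measurable_snd (measurable_fst.comp measurable_fst)).inter
             (measurableSet_le measurable_snd (measurable_snd.comp measurable_fst)))).aestronglyMeasurable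
        refine Integrable.mono' (integrable_const 1) hmeas (Filter.Eventually.of_forall ?_)
        rintro ⟨⟨a, b⟩, u⟩
        by_cases h : u ≤ a ∧ u ≤ b <;>
          simp [Function.uncurry, indicator_apply, Set.mem_prod, h]
    _ = ∫ u in Icc (0:ℝ) T, G μ u * G ν u := by
        refine setIntegral_congr_fun measurableSet_Icc (fun u _ => ?_)
        rw [integral_indicator_const (1:ℝ) (measurableSet_Ici.prod measurableSet_Ici),
          smul_eq_mul, mul_one, measureReal_def, Measure.prod_prod, ENNReal.toReal_mul]
        rfl

lemma intOn_GG {T : ℝ} (μ ν : Measure ℝ) [IsFiniteMeasure μ] [IsFiniteMeasure ν] :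
    IntegrableOn (fun u => G μ u * G ν u) (Icc 0 T) volume := by
  refine bddIntegrableOn (((G_measurable μ).mul (G_measurable ν)).aestronglyMeasurable)
    (C := (μ univ).toReal * (ν univ).toReal) fun u _ => ?_
  rw [abs_mul, abs_of_nonneg (G_nonneg μ u), abs_of_nonneg (G_nonneg ν u)]
  exact mul_le_mul (G_le μ u) (G_le ν u) (G_nonneg ν u) ENNReal.toReal_nonneg

lemma intOn_dG {T : ℝ} {φ : ℝ → ℝ} (hd : Continuous (deriv φ))
    (μ : Measure ℝ) [IsFiniteMeasure μ] :
    IntegrableOn (fun u => deriv φ u * G μ u) (Icc 0 T) volume := by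
  obtain ⟨C, hC⟩ := isCompact_Icc.exists_bound_of_continuousOn
    (hd.continuousOn (s := Icc (0:ℝ) T))
  refine bddIntegrableOn ((hd.measurable.mul (G_measurable μ)).aestronglyMeasurable)
    (C := C * (μ univ).toReal) fun u hu => ?_
  rw [abs_mul, abs_of_nonneg (G_nonneg μ u)]
  exact mul_le_mul (by simpa using hC u hu) (G_le μ u) (G_nonneg μ u)
    (le_trans (abs_nonneg _) (by simpa using hC u hu))

lemma value_eq {T σ2 : ℝ} (hT : 0 ≤ T) {φ : ℝ → ℝ} (hφ : ContDiff ℝ 2 φ) (hφ0 : φ 0 = 0)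
    (μ₁ μ₂ : Measure ℝ) [IsFiniteMeasure μ₁] [IsFiniteMeasure μ₂]
    (h1 : μ₁ (Icc 0 T)ᶜ = 0) (h2 : μ₂ (Icc 0 T)ᶜ = 0) :
    ((∫ t, φ t ∂μ₁) - ∫ t, φ t ∂μ₂)
      - (σ2 / 2) * (((∫ p : ℝ × ℝ, min p.1 p.2 ∂(μ₁.prod μ₁))
          - ∫ p : ℝ × ℝ, min p.1 p.2 ∂(μ₁.prod μ₂))
          - (∫ p : ℝ × ℝ, min p.1 p.2 ∂(μ₂.prod μ₁))
          + ∫ p : ℝ × ℝ, min p.1 p.2 ∂(μ₂.prod μ₂))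
    = ∫ u in Icc 0 T,
        (deriv φ u * (G μ₁ u - G μ₂ u) - σ2 / 2 * (G μ₁ u - G μ₂ u) ^ 2) := by
  have hd : Continuous (deriv φ) := hφ.continuous_deriv (by norm_num)
  have hfg : ∀ (μ ν : Measure ℝ) [IsFiniteMeasure μ] [IsFiniteMeasure ν],
      IntegrableOn (fun u => G μ u * G ν u) (Icc 0 T) volume := fun μ ν _ _ => intOn_GG μ ν
  have hdg : ∀ (μ : Measure ℝ) [IsFiniteMeasure μ],
      IntegrableOn (fun u => deriv φ u * G μ u) (Icc 0 T) volume := fun μ _ => intOn_dG hd μ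
  have hq1 : IntegrableOn (fun u => deriv φ u * G μ₁ u - deriv φ u * G μ₂ u)
      (Icc 0 T) volume := (hdg μ₁).sub (hdg μ₂)
  have hq2 : IntegrableOn (fun u => G μ₁ u * G μ₁ u - G μ₁ u * G μ₂ u)
      (Icc 0 T) volume := (hfg μ₁ μ₁).sub (hfg μ₁ μ₂)
  have hq3 : IntegrableOn
      (fun u => G μ₁ u * G μ₁ u - G μ₁ u * G μ₂ u - G μ₂ u * G μ₁ u)
      (Icc 0 T) volume := hq2.sub (hfg μ₂ μ₁)
  have hq4 : IntegrableOn
      (fun u => G μ₁ u * G μ₁ u - G μ₁ u * G μ₂ u - G μ₂ u * G μ₁ u + G μ₂ u * G μ₂ u)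
      (Icc 0 T) volume := hq3.add (hfg μ₂ μ₂)
  have hq5 : IntegrableOn
      (fun u => σ2 / 2 * (G μ₁ u * G μ₁ u - G μ₁ u * G μ₂ u - G μ₂ u * G μ₁ u
        + G μ₂ u * G μ₂ u)) (Icc 0 T) volume := hq4.const_mul _
  rw [intA hT hφ hφ0 μ₁ h1, intA hT hφ hφ0 μ₂ h2, intB hT μ₁ μ₁ h1 h1, intB hT μ₁ μ₂ h1 h2,
    intB hT μ₂ μ₁ h2 h1, intB hT μ₂ μ₂ h2 h2]
  rw [show (∫ u in Icc (0:ℝ) T,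
        (deriv φ u * (G μ₁ u - G μ₂ u) - σ2 / 2 * (G μ₁ u - G μ₂ u) ^ 2))
      = ∫ u in Icc (0:ℝ) T,
        ((deriv φ u * G μ₁ u - deriv φ u * G μ₂ u)
          - σ2 / 2 * ((G μ₁ u * G μ₁ u - G μ₁ u * G μ₂ u) - G μ₂ u * G μ₁ u
            + G μ₂ u * G μ₂ u)) from
    setIntegral_congr_fun measurableSet_Icc fun u _ => by ring]
  rw [integral_sub hq1 hq5, integral_sub (hdg μ₁) (hdg μ₂), integral_const_mul,
    integral_add hq3 (hfg μ₂ μ₂), integral_sub hq2 (hfg μ₂ μ₁),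
    integral_sub (hfg μ₁ μ₁) (hfg μ₁ μ₂)]

lemma target_eq {T σ2 : ℝ} (hT : 0 ≤ T) (φ : ℝ → ℝ) :
    (1 / (2 * σ2)) * ∫ t in (0:ℝ)..T, (deriv φ t) ^ 2
      = ∫ u in Icc (0:ℝ) T, 1 / (2 * σ2) * (deriv φ u) ^ 2 := by
  rw [integral_const_mul, intervalIntegral.integral_of_le hT, ← integral_Icc_eq_integral_Ioc]

lemma opt {T σ2 : ℝ} (hT : 0 ≤ T) (hσ : 0 < σ2) (ψ : ℝ → ℝ) (hψ : Continuous ψ) (c : ℝ) :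
    IsFiniteMeasure ((volume.restrict (Icc 0 T)).withDensity
        (fun t => ENNReal.ofReal (ψ t / σ2)) + (ENNReal.ofReal (c / σ2)) • Measure.dirac T) ∧
    ((volume.restrict (Icc 0 T)).withDensity
        (fun t => ENNReal.ofReal (ψ t / σ2)) + (ENNReal.ofReal (c / σ2)) • Measure.dirac T)
      (Icc 0 T)ᶜ = 0 ∧
    ∀ u ∈ Icc (0:ℝ) T,
      G ((volume.restrict (Icc 0 T)).withDensity
          (fun t => ENNReal.ofReal (ψ t / σ2)) + (ENNReal.ofReal (c / σ2)) • Measure.dirac T) u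
        = (∫ t in Icc u T, max (ψ t / σ2) 0) + max (c / σ2) 0 := by
  set ρ : Measure ℝ := (volume.restrict (Icc 0 T)).withDensity
    (fun t => ENNReal.ofReal (ψ t / σ2)) with hρ
  obtain ⟨C, hC⟩ := isCompact_Icc.exists_bound_of_continuousOn
    (hψ.continuousOn (s := Icc (0:ℝ) T))
  have hlint : (∫⁻ a, ENNReal.ofReal (ψ a / σ2) ∂(volume.restrict (Icc 0 T))) ≠ ⊤ := by
    refine ne_of_lt (lt_of_le_of_lt ?_ (?_ : ENNReal.ofReal (C / σ2) * volume (Icc (0:ℝ) T) < ⊤))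
    · calc ∫⁻ a in Icc (0:ℝ) T, ENNReal.ofReal (ψ a / σ2) ∂volume
          ≤ ∫⁻ _ in Icc (0:ℝ) T, ENNReal.ofReal (C / σ2) ∂volume := by
            refine setLIntegral_mono measurable_const fun x hx => ?_
            refine ENNReal.ofReal_le_ofReal ?_
            gcongr
            exact (le_abs_self _).trans (by simpa using hC x hx)
        _ = ENNReal.ofReal (C / σ2) * volume (Icc (0:ℝ) T) := setLIntegral_const _ _
    · exact ENNReal.mul_lt_top ENNReal.ofReal_lt_top isCompact_Icc.measure_lt_top
  haveI hfinρ : IsFiniteMeasure ρ := isFiniteMeasure_withDensity hlint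
  have hfinsum : IsFiniteMeasure (ρ + ENNReal.ofReal (c / σ2) • Measure.dirac T) := by
    constructor
    rw [Measure.add_apply, Measure.smul_apply, smul_eq_mul]
    exact ENNReal.add_lt_top.mpr ⟨measure_lt_top ρ _,
      ENNReal.mul_lt_top ENNReal.ofReal_lt_top (by simp)⟩
  refine ⟨hfinsum, ?_, ?_⟩
  · -- support
    rw [Measure.add_apply, Measure.smul_apply, hρ,
      withDensity_apply _ measurableSet_Icc.compl,
      Measure.restrict_restrict measurableSet_Icc.compl, compl_inter_self,
      Measure.restrict_empty, lintegral_zero_measure,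
      Measure.dirac_apply' _ measurableSet_Icc.compl]
    simp [hT]
  · -- value of G
    intro u hu
    have hmeas : Measurable fun t => ENNReal.ofReal (ψ t / σ2) :=
      ENNReal.measurable_ofReal.comp (hψ.measurable.div_const σ2)
    have hset : Ici u ∩ Icc 0 T = Icc u T := by
      ext x
      simp only [mem_inter_iff, mem_Ici, mem_Icc]
      constructor
      · rintro ⟨h1, _, h3⟩; exact ⟨h1, h3⟩
      · rintro ⟨h1, h2⟩; exact ⟨h1, hu.1.trans h1, h2⟩
    have hρIci : ρ (Ici u) = ∫⁻ t in Icc u T, ENNReal.ofReal (ψ t / σ2) ∂volume := by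
      rw [hρ, withDensity_apply _ measurableSet_Ici,
        Measure.restrict_restrict measurableSet_Ici, hset]
    have hofr : ∀ t : ℝ, ENNReal.ofReal (ψ t / σ2) = ENNReal.ofReal (max (ψ t / σ2) 0) := by
      intro t
      rcases le_total (ψ t / σ2) 0 with h | h
      · rw [max_eq_right h, ENNReal.ofReal_zero, ENNReal.ofReal_eq_zero.mpr h]
      · rw [max_eq_left h]
    have hInt : ∫ t in Icc u T, max (ψ t / σ2) 0
        = (∫⁻ t in Icc u T, ENNReal.ofReal (ψ t / σ2) ∂volume).toReal := by
      rw [integral_eq_lintegral_of_nonneg_ae (f := fun t => max (ψ t / σ2) 0)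
        (Filter.Eventually.of_forall fun t => le_max_right _ _)
        (((hψ.div_const σ2).max continuous_const).aestronglyMeasurable)]
      congr 1
      exact lintegral_congr fun t => (hofr t).symm
    have hdir : Measure.dirac T (Ici u) = 1 := by
      rw [Measure.dirac_apply' _ measurableSet_Ici]
      simp [hu.2]
    have hofr' : ∀ a : ℝ, ENNReal.ofReal a = ENNReal.ofReal (max a 0) := by
      intro a
      rcases le_total a 0 with h | h
      · rw [max_eq_right h, ENNReal.ofReal_zero, ENNReal.ofReal_eq_zero.mpr h]
      · rw [max_eq_left h]
    unfold G
    rw [Measure.add_apply, Measure.smul_apply, hdir, smul_eq_mul, mul_one,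
      ENNReal.toReal_add (measure_ne_top ρ _) ENNReal.ofReal_ne_top, hρIci, hInt,
      hofr' (c / σ2), ENNReal.toReal_ofReal (le_max_right _ _)]

end FLB

open FLB

/-- Fenchel–Legendre transform of `Λ(ν) = (σ²/2) ∫∫ min(s,t) ν(ds)ν(dt)` over signed
measures `ν` on `[0,T]` (represented as differences `μ₁ - μ₂` of finite measures
supported on `[0,T]`): for `φ ∈ C²` with `φ(0) = 0`,
`Λ*(φ) = sup_ν { ν(φ) - Λ(ν) } = (1/(2σ²)) ∫₀ᵀ |φ'|²`, and the supremum is attained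
at `ν(dt) = -(φ''(t)/σ²) dt + (φ'(T)/σ²) δ_T(dt)`. -/
theorem fenchel_legendre_brownian_type (T σ2 : ℝ) (hT : 0 < T) (hσ : 0 < σ2)
    (φ : ℝ → ℝ) (hφ : ContDiff ℝ 2 φ) (hφ0 : φ 0 = 0) :
    IsGreatest
      {x : ℝ | ∃ μ₁ μ₂ : Measure ℝ, IsFiniteMeasure μ₁ ∧ IsFiniteMeasure μ₂ ∧
        μ₁ (Set.Icc 0 T)ᶜ = 0 ∧ μ₂ (Set.Icc 0 T)ᶜ = 0 ∧
        x = ((∫ t, φ t ∂μ₁) - ∫ t, φ t ∂μ₂)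
          - (σ2 / 2) * (((∫ p : ℝ × ℝ, min p.1 p.2 ∂(μ₁.prod μ₁))
              - ∫ p : ℝ × ℝ, min p.1 p.2 ∂(μ₁.prod μ₂))
              - (∫ p : ℝ × ℝ, min p.1 p.2 ∂(μ₂.prod μ₁))
              + ∫ p : ℝ × ℝ, min p.1 p.2 ∂(μ₂.prod μ₂))}
      ((1 / (2 * σ2)) * ∫ t in (0 : ℝ)..T, (deriv φ t) ^ 2) ∧
    (∃ μ₁ μ₂ : Measure ℝ,
      μ₁ = (volume.restrict (Set.Icc 0 T)).withDensity
            (fun t => ENNReal.ofReal (-(deriv (deriv φ) t) / σ2))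
          + (ENNReal.ofReal (deriv φ T / σ2)) • Measure.dirac T ∧
      μ₂ = (volume.restrict (Set.Icc 0 T)).withDensity
            (fun t => ENNReal.ofReal ((deriv (deriv φ) t) / σ2))
          + (ENNReal.ofReal (-(deriv φ T) / σ2)) • Measure.dirac T ∧
      ((∫ t, φ t ∂μ₁) - ∫ t, φ t ∂μ₂)
          - (σ2 / 2) * (((∫ p : ℝ × ℝ, min p.1 p.2 ∂(μ₁.prod μ₁))
              - ∫ p : ℝ × ℝ, min p.1 p.2 ∂(μ₁.prod μ₂))
              - (∫ p : ℝ × ℝ, min p.1 p.2 ∂(μ₂.prod μ₁))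
              + ∫ p : ℝ × ℝ, min p.1 p.2 ∂(μ₂.prod μ₂))
        = (1 / (2 * σ2)) * ∫ t in (0 : ℝ)..T, (deriv φ t) ^ 2) := by
  have hT' : (0:ℝ) ≤ T := hT.le
  have hσ0 : σ2 ≠ 0 := ne_of_gt hσ
  have hd : Continuous (deriv φ) := hφ.continuous_deriv (by norm_num)
  have hφ1 : ContDiff ℝ 1 (deriv φ) := by
    have h : (2 : WithTop ℕ∞) = 1 + 1 := by norm_num
    have hφ' := hφ
    rw [h] at hφ'
    exact (contDiff_succ_iff_deriv.mp hφ').2.2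
  have hd2 : Continuous (deriv (deriv φ)) := hφ1.continuous_deriv le_rfl
  set μ₁ : Measure ℝ := (volume.restrict (Set.Icc 0 T)).withDensity
      (fun t => ENNReal.ofReal (-(deriv (deriv φ) t) / σ2))
    + (ENNReal.ofReal (deriv φ T / σ2)) • Measure.dirac T with hμ₁
  set μ₂ : Measure ℝ := (volume.restrict (Set.Icc 0 T)).withDensity
      (fun t => ENNReal.ofReal ((deriv (deriv φ) t) / σ2))
    + (ENNReal.ofReal (-(deriv φ T) / σ2)) • Measure.dirac T with hμ₂
  obtain ⟨fin₁, s₁, g₁⟩ :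
      IsFiniteMeasure μ₁ ∧ μ₁ (Icc 0 T)ᶜ = 0 ∧ ∀ u ∈ Icc (0:ℝ) T,
        G μ₁ u = (∫ t in Icc u T, max (-(deriv (deriv φ) t) / σ2) 0)
          + max (deriv φ T / σ2) 0 :=
    opt hT' hσ (fun t => -(deriv (deriv φ) t)) hd2.neg (deriv φ T)
  obtain ⟨fin₂, s₂, g₂⟩ :
      IsFiniteMeasure μ₂ ∧ μ₂ (Icc 0 T)ᶜ = 0 ∧ ∀ u ∈ Icc (0:ℝ) T,
        G μ₂ u = (∫ t in Icc u T, max ((deriv (deriv φ) t) / σ2) 0)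
          + max (-(deriv φ T) / σ2) 0 :=
    opt hT' hσ (fun t => deriv (deriv φ) t) hd2 (-(deriv φ T))
  haveI := fin₁
  haveI := fin₂
  have hmax : ∀ a : ℝ, max a 0 - max (-a) 0 = a := by
    intro a
    rcases le_total a 0 with h | h
    · rw [max_eq_right h, max_eq_left (neg_nonneg.mpr h)]; ring
    · rw [max_eq_left h, max_eq_right (neg_nonpos.mpr h)]; ring
  have hg : ∀ u ∈ Icc (0:ℝ) T, G μ₁ u - G μ₂ u = deriv φ u / σ2 := by
    intro u hu
    rw [g₁ u hu, g₂ u hu]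
    have hint1 : IntegrableOn (fun t => max (-(deriv (deriv φ) t) / σ2) 0) (Icc u T) volume :=
      ((hd2.neg.div_const σ2).max continuous_const).integrableOn_Icc
    have hint2 : IntegrableOn (fun t => max ((deriv (deriv φ) t) / σ2) 0) (Icc u T) volume :=
      ((hd2.div_const σ2).max continuous_const).integrableOn_Icc
    have hcomb : (∫ t in Icc u T, max (-(deriv (deriv φ) t) / σ2) 0)
        - ∫ t in Icc u T, max ((deriv (deriv φ) t) / σ2) 0
        = ∫ t in Icc u T, (-(deriv (deriv φ) t) / σ2) := by
      rw [← integral_sub hint1 hint2]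
      refine setIntegral_congr_fun measurableSet_Icc fun t _ => ?_
      have h := hmax (-(deriv (deriv φ) t) / σ2)
      simpa [neg_div, neg_neg] using h
    have hFTC : ∫ t in Icc u T, (-(deriv (deriv φ) t) / σ2)
        = (deriv φ u - deriv φ T) / σ2 := by
      have h0 : ∫ t in u..T, deriv (deriv φ) t = deriv φ T - deriv φ u :=
        intervalIntegral.integral_deriv_eq_sub' (deriv φ) rfl
          (fun x _ => (hφ1.differentiable one_ne_zero).differentiableAt) hd2.continuousOn
      rw [show (∫ t in Icc u T, (-(deriv (deriv φ) t) / σ2))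
          = ∫ t in u..T, (-(deriv (deriv φ) t) / σ2) by
        rw [intervalIntegral.integral_of_le hu.2, integral_Icc_eq_integral_Ioc],
        show (fun t => -(deriv (deriv φ) t) / σ2) = fun t => (-(1:ℝ)/σ2) * deriv (deriv φ) t by
          funext t; ring,
        intervalIntegral.integral_const_mul, h0]
      field_simp
      ring
    have e2 : max (deriv φ T / σ2) 0 - max (-(deriv φ T) / σ2) 0 = deriv φ T / σ2 := by
      rw [neg_div]; exact hmax _
    have e3 : (deriv φ u - deriv φ T) / σ2 + deriv φ T / σ2 = deriv φ u / σ2 := by ring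
    linarith [hcomb, hFTC, e2, e3]
  have key : ∀ a b : ℝ, a * b - σ2 / 2 * b ^ 2 ≤ 1 / (2 * σ2) * a ^ 2 := by
    intro a b
    rw [← sub_nonneg]
    rw [show 1 / (2 * σ2) * a ^ 2 - (a * b - σ2 / 2 * b ^ 2)
        = (σ2 * b - a) ^ 2 / (2 * σ2) by field_simp; ring]
    positivity
  have hval :
      ((∫ t, φ t ∂μ₁) - ∫ t, φ t ∂μ₂)
          - (σ2 / 2) * (((∫ p : ℝ × ℝ, min p.1 p.2 ∂(μ₁.prod μ₁))
              - ∫ p : ℝ × ℝ, min p.1 p.2 ∂(μ₁.prod μ₂))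
              - (∫ p : ℝ × ℝ, min p.1 p.2 ∂(μ₂.prod μ₁))
              + ∫ p : ℝ × ℝ, min p.1 p.2 ∂(μ₂.prod μ₂))
        = (1 / (2 * σ2)) * ∫ t in (0 : ℝ)..T, (deriv φ t) ^ 2 := by
    rw [value_eq hT' hφ hφ0 μ₁ μ₂ s₁ s₂, target_eq hT' φ]
    refine setIntegral_congr_fun measurableSet_Icc fun u hu => ?_
    rw [hg u hu]
    field_simp
    ring
  refine ⟨⟨⟨μ₁, μ₂, fin₁, fin₂, s₁, s₂, hval.symm⟩, ?_⟩, μ₁, μ₂, rfl, rfl, hval⟩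
  rintro x ⟨ν₁, ν₂, f1, f2, t1, t2, rfl⟩
  haveI := f1
  haveI := f2
  rw [value_eq hT' hφ hφ0 ν₁ ν₂ t1 t2, target_eq hT' φ]
  have hlhsInt : IntegrableOn
      (fun u => deriv φ u * (G ν₁ u - G ν₂ u) - σ2 / 2 * (G ν₁ u - G ν₂ u) ^ 2)
      (Icc 0 T) volume := by
    rw [show (fun u => deriv φ u * (G ν₁ u - G ν₂ u) - σ2 / 2 * (G ν₁ u - G ν₂ u) ^ 2)
        = fun u => (deriv φ u * G ν₁ u - deriv φ u * G ν₂ u)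
          - σ2 / 2 * (G ν₁ u * G ν₁ u - G ν₁ u * G ν₂ u - G ν₂ u * G ν₁ u
            + G ν₂ u * G ν₂ u) by funext u; ring]
    exact ((intOn_dG hd ν₁).sub (intOn_dG hd ν₂)).sub
      (((((intOn_GG ν₁ ν₁).sub (intOn_GG ν₁ ν₂)).sub (intOn_GG ν₂ ν₁)).add
        (intOn_GG ν₂ ν₂)).const_mul _)
  refine setIntegral_mono_on hlhsInt
    ((continuous_const.mul (hd.pow 2)).integrableOn_Icc) measurableSet_Icc
    fun u _ => key (deriv φ u) (G ν₁ u - G ν₂ u)
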